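/- Let C be a code on n neurons and D a code on m neurons, and let C ⊔ D be the code on n + m neurons whose codewords are the codewords of C (on the first n indices) together with the codewords of D (shifted to the last m indices). Then for every d ≥ 1, C ⊔ D has a non-degenerate convex realization in ℝ^d if and only if both C and D have non-degenerate convex realizations in ℝ^d. Consequently nddim(C ⊔ D) = max{nddim(C), nddim(D)}. -/

import Mathlib

open Set

noncomputable section

/-- Euclidean space `ℝ^d`. -/
abbrev Euc (d : ℕ) : Type := EuclideanSpace ℝ (Fin d)

/-- The code of a collection of sets `U = (U 0, …, U (n-1))` in `ℝ^d`. -/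
def codeOf {n d : ℕ} (U : Fin n → Set (Euc d)) : Set (Finset (Fin n)) :=
  {σ | ∃ p : Euc d, ∀ i : Fin n, p ∈ U i ↔ i ∈ σ}

/-- `U` is an open convex realization of the code `C`. -/
def IsOpenReal {n d : ℕ} (C : Set (Finset (Fin n))) (U : Fin n → Set (Euc d)) : Prop :=
  (∀ i, Convex ℝ (U i)) ∧ (∀ i, IsOpen (U i)) ∧ codeOf U = C

/-- `X` is a closed convex realization of the code `C`. -/
def IsClosedReal {n d : ℕ} (C : Set (Finset (Fin n))) (X : Fin n → Set (Euc d)) : Prop :=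
  (∀ i, Convex ℝ (X i)) ∧ (∀ i, IsClosed (X i)) ∧ codeOf X = C

/-- `C` has an open convex realization in `ℝ^d`. -/
def HasOpenReal {n : ℕ} (C : Set (Finset (Fin n))) (d : ℕ) : Prop :=
  ∃ U : Fin n → Set (Euc d), IsOpenReal C U

/-- `C` has a closed convex realization in `ℝ^d`. -/
def HasClosedReal {n : ℕ} (C : Set (Finset (Fin n))) (d : ℕ) : Prop :=
  ∃ X : Fin n → Set (Euc d), IsClosedReal C X

/-- `U` is a non-degenerate open convex realization of `C`: it is an open convex
realization and the closures of its sets realize the same code. -/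
def IsNondegOpenReal {n d : ℕ} (C : Set (Finset (Fin n))) (U : Fin n → Set (Euc d)) : Prop :=
  IsOpenReal C U ∧ codeOf (fun i => closure (U i)) = C

/-- `X` is a non-degenerate closed convex realization of `C`: it is a closed convex
realization and the interiors of its sets realize the same code. -/
def IsNondegClosedReal {n d : ℕ} (C : Set (Finset (Fin n))) (X : Fin n → Set (Euc d)) : Prop :=
  IsClosedReal C X ∧ codeOf (fun i => interior (X i)) = C

/-- `C` has a non-degenerate (open or closed) convex realization in `ℝ^d`. -/
def HasNondegReal {n : ℕ} (C : Set (Finset (Fin n))) (d : ℕ) : Prop :=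
  (∃ U : Fin n → Set (Euc d), IsNondegOpenReal C U) ∨
  (∃ X : Fin n → Set (Euc d), IsNondegClosedReal C X)

/-- Open embedding dimension (`⊤` if no open convex realization exists). -/
def odim {n : ℕ} (C : Set (Finset (Fin n))) : ℕ∞ :=
  sInf {e : ℕ∞ | ∃ d : ℕ, e = d ∧ HasOpenReal C d}

/-- Closed embedding dimension (`⊤` if no closed convex realization exists). -/
def cdim {n : ℕ} (C : Set (Finset (Fin n))) : ℕ∞ :=
  sInf {e : ℕ∞ | ∃ d : ℕ, e = d ∧ HasClosedReal C d}

/-- Non-degenerate embedding dimension (`⊤` if no non-degenerate realization exists). -/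
def nddim {n : ℕ} (C : Set (Finset (Fin n))) : ℕ∞ :=
  sInf {e : ℕ∞ | ∃ d : ℕ, e = d ∧ HasNondegReal C d}

/-- Embedding of `Fin n` into the first `n` indices of `Fin (n + m)`. -/
def finLeftEmb (n m : ℕ) : Fin n ↪ Fin (n + m) :=
  ⟨fun i => ⟨i.1, Nat.lt_of_lt_of_le i.2 (Nat.le_add_right n m)⟩,
    fun a b h => by apply Fin.ext; simpa using congrArg Fin.val h⟩

/-- Embedding of `Fin m` into the last `m` indices of `Fin (n + m)`. -/
def finRightEmb (n m : ℕ) : Fin m ↪ Fin (n + m) :=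
  ⟨fun i => ⟨n + i.1, Nat.add_lt_add_left i.2 n⟩,
    fun a b h => by apply Fin.ext; have := congrArg Fin.val h; simpa using this⟩

/-- The disjoint union `C ⊔ D` of a code on `n` neurons (on the first `n` indices)
and a code on `m` neurons (shifted to the last `m` indices). -/
def codeSum {n m : ℕ} (C : Set (Finset (Fin n))) (D : Set (Finset (Fin m))) :
    Set (Finset (Fin (n + m))) :=
  {τ | ∃ σ ∈ C, τ = σ.map (finLeftEmb n m)} ∪ {τ | ∃ σ ∈ D, τ = σ.map (finRightEmb n m)}


section Aux

open Filter

lemma seg_mem_closure {d : ℕ} {s t : Set (Euc d)} (hs : Convex ℝ s) (ht : Convex ℝ t)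
    {w z : Euc d} (hws : w ∈ interior s) (hwt : w ∈ interior t)
    (hzs : z ∈ closure s) (hzt : z ∈ closure t) :
    z ∈ closure (interior s ∩ interior t) := by
  have hmem : ∀ k : ℕ, z + (1/(k+1) : ℝ) • (w - z) ∈ interior s ∩ interior t := by
    intro k
    have hpos : (0:ℝ) < 1/(k+1) := by positivity
    have hle : (1/(k+1) : ℝ) ≤ 1 := by
      rw [div_le_one (by positivity)]; linarith [Nat.cast_nonneg (α := ℝ) k]
    have hb : (0:ℝ) ≤ 1 - 1/(k+1) := by linarith
    have hab : (1/(k+1) : ℝ) + (1 - 1/(k+1)) = 1 := by ring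
    have h1 := hs.combo_interior_closure_mem_interior hws hzs hpos hb hab
    have h2 := ht.combo_interior_closure_mem_interior hwt hzt hpos hb hab
    have he : (1/(k+1) : ℝ) • w + (1 - 1/(k+1) : ℝ) • z = z + (1/(k+1) : ℝ) • (w - z) := by
      rw [sub_smul, one_smul, smul_sub]; abel
    rw [he] at h1 h2
    exact ⟨h1, h2⟩
  have htend : Tendsto (fun k : ℕ => z + (1/(k+1) : ℝ) • (w - z)) atTop (nhds z) := by
    have h0 : Tendsto (fun k : ℕ => (1/(k+1) : ℝ) • (w - z)) atTop (nhds ((0:ℝ) • (w - z))) :=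
      tendsto_one_div_add_atTop_nhds_zero_nat.smul_const _
    rw [zero_smul] at h0
    simpa using (tendsto_const_nhds.add h0 : Tendsto _ _ (nhds (z + 0)))
  exact mem_closure_of_tendsto htend (Eventually.of_forall hmem)

lemma codeOf_preimage {n d e : ℕ} (f : Euc e → Euc d) (hf : Function.Surjective f)
    (U : Fin n → Set (Euc d)) : codeOf (fun i => f ⁻¹' U i) = codeOf U := by
  ext σ
  constructor
  · rintro ⟨p, hp⟩; exact ⟨f p, hp⟩
  · rintro ⟨p, hp⟩
    obtain ⟨q, rfl⟩ := hf p
    exact ⟨q, hp⟩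

lemma nondegOpen_of_nondegClosed {n d : ℕ} {C : Set (Finset (Fin n))} {X : Fin n → Set (Euc d)}
    (h : IsNondegClosedReal C X) : IsNondegOpenReal C (fun i => interior (X i)) := by
  obtain ⟨⟨hconv, hcl, hcode⟩, hicode⟩ := h
  have hne : ∀ i, (X i).Nonempty → (interior (X i)).Nonempty := by
    intro i ⟨p, hp⟩
    classical
    have hσ : (Finset.univ.filter fun j => p ∈ X j) ∈ codeOf X :=
      ⟨p, fun j => by simp⟩
    rw [hcode, ← hicode] at hσ
    obtain ⟨q, hq⟩ := hσ
    exact ⟨q, (hq i).2 (by simp [hp])⟩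
  have hclint : ∀ i, closure (interior (X i)) = X i := by
    intro i
    rcases eq_empty_or_nonempty (X i) with he | hne'
    · simp [he]
    · obtain ⟨w, hw⟩ := hne i hne'
      apply Subset.antisymm
      · calc closure (interior (X i)) ⊆ closure (X i) := closure_mono interior_subset
          _ = X i := (hcl i).closure_eq
      · intro z hz
        have := seg_mem_closure (hconv i) (hconv i) hw hw
          (subset_closure hz) (subset_closure hz)
        rw [inter_self] at this
        exact this
  refine ⟨⟨fun i => (hconv i).interior, fun i => isOpen_interior, hicode⟩, ?_⟩
  have : (fun i => closure (interior (X i))) = X := funext hclint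
  rw [this, hcode]

lemma finLeftEmb_eq_castAdd {n m : ℕ} (i : Fin n) : finLeftEmb n m i = Fin.castAdd m i := rfl

lemma finRightEmb_eq_natAdd {n m : ℕ} (i : Fin m) : finRightEmb n m i = Fin.natAdd n i := rfl

/-- Restriction of a realization of `codeSum C D` to the left indices realizes `C`. -/
lemma codeOf_restrict_left {n m d : ℕ} {C : Set (Finset (Fin n))} {D : Set (Finset (Fin m))}
    (hC : ∅ ∈ C) (V : Fin (n + m) → Set (Euc d)) (h : codeOf V = codeSum C D) :
    codeOf (fun i => V (finLeftEmb n m i)) = C := by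
  classical
  ext σ'
  constructor
  · rintro ⟨p, hp⟩
    have hτ : (Finset.univ.filter fun k => p ∈ V k) ∈ codeOf V := ⟨p, fun k => by simp⟩
    rw [h] at hτ
    rcases hτ with ⟨σ, hσ, hτ⟩ | ⟨σ, hσ, hτ⟩
    · have : σ' = σ := by
        ext i
        rw [← hp i]
        have : p ∈ V (finLeftEmb n m i) ↔ finLeftEmb n m i ∈ σ.map (finLeftEmb n m) := by
          rw [← hτ]; simp
        rw [this, Finset.mem_map']
      rwa [this]
    · have : σ' = ∅ := by
        ext i
        simp only [Finset.notMem_empty, iff_false]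
        rw [← hp i]
        have : p ∈ V (finLeftEmb n m i) ↔ finLeftEmb n m i ∈ σ.map (finRightEmb n m) := by
          rw [← hτ]; simp
        rw [this]
        intro hmem
        obtain ⟨j, _, hj⟩ := Finset.mem_map.mp hmem
        have hj' := congrArg Fin.val hj
        change n + (j : ℕ) = (i : ℕ) at hj'
        omega
      rw [this]; exact hC
  · intro hσ'
    have : σ'.map (finLeftEmb n m) ∈ codeOf V := by
      rw [h]; exact Or.inl ⟨σ', hσ', rfl⟩
    obtain ⟨p, hp⟩ := this
    exact ⟨p, fun i => by rw [hp (finLeftEmb n m i), Finset.mem_map']⟩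

/-- Restriction of a realization of `codeSum C D` to the right indices realizes `D`. -/
lemma codeOf_restrict_right {n m d : ℕ} {C : Set (Finset (Fin n))} {D : Set (Finset (Fin m))}
    (hD : ∅ ∈ D) (V : Fin (n + m) → Set (Euc d)) (h : codeOf V = codeSum C D) :
    codeOf (fun j => V (finRightEmb n m j)) = D := by
  classical
  ext σ'
  constructor
  · rintro ⟨p, hp⟩
    have hτ : (Finset.univ.filter fun k => p ∈ V k) ∈ codeOf V := ⟨p, fun k => by simp⟩
    rw [h] at hτ
    rcases hτ with ⟨σ, hσ, hτ⟩ | ⟨σ, hσ, hτ⟩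
    · have : σ' = ∅ := by
        ext j
        simp only [Finset.notMem_empty, iff_false]
        rw [← hp j]
        have : p ∈ V (finRightEmb n m j) ↔ finRightEmb n m j ∈ σ.map (finLeftEmb n m) := by
          rw [← hτ]; simp
        rw [this]
        intro hmem
        obtain ⟨i, _, hi⟩ := Finset.mem_map.mp hmem
        have hi' := congrArg Fin.val hi
        change (i : ℕ) = n + (j : ℕ) at hi'
        have := i.2
        omega
      rw [this]; exact hD
    · have : σ' = σ := by
        ext j
        rw [← hp j]
        have : p ∈ V (finRightEmb n m j) ↔ finRightEmb n m j ∈ σ.map (finRightEmb n m) := by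
          rw [← hτ]; simp
        rw [this, Finset.mem_map']
      rwa [this]
  · intro hσ'
    have : σ'.map (finRightEmb n m) ∈ codeOf V := by
      rw [h]; exact Or.inr ⟨σ', hσ', rfl⟩
    obtain ⟨p, hp⟩ := this
    exact ⟨p, fun j => by rw [hp (finRightEmb n m j), Finset.mem_map']⟩

/-- Forward direction: a non-degenerate realization of `codeSum C D` restricts. -/
lemma hasNondeg_of_codeSum {n m d : ℕ} {C : Set (Finset (Fin n))} {D : Set (Finset (Fin m))}
    (hC : ∅ ∈ C) (hD : ∅ ∈ D) (h : HasNondegReal (codeSum C D) d) :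
    HasNondegReal C d ∧ HasNondegReal D d := by
  rcases h with ⟨V, ⟨⟨hconv, hopen, hcode⟩, hclcode⟩⟩ | ⟨X, ⟨⟨hconv, hcl, hcode⟩, hicode⟩⟩
  · constructor
    · exact Or.inl ⟨fun i => V (finLeftEmb n m i),
        ⟨⟨fun i => hconv _, fun i => hopen _, codeOf_restrict_left hC V hcode⟩,
          codeOf_restrict_left hC (fun k => closure (V k)) hclcode⟩⟩
    · exact Or.inl ⟨fun j => V (finRightEmb n m j),
        ⟨⟨fun j => hconv _, fun j => hopen _, codeOf_restrict_right hD V hcode⟩,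
          codeOf_restrict_right hD (fun k => closure (V k)) hclcode⟩⟩
  · constructor
    · exact Or.inr ⟨fun i => X (finLeftEmb n m i),
        ⟨⟨fun i => hconv _, fun i => hcl _, codeOf_restrict_left hC X hcode⟩,
          codeOf_restrict_left hC (fun k => interior (X k)) hicode⟩⟩
    · exact Or.inr ⟨fun j => X (finRightEmb n m j),
        ⟨⟨fun j => hconv _, fun j => hcl _, codeOf_restrict_right hD X hcode⟩,
          codeOf_restrict_right hD (fun k => interior (X k)) hicode⟩⟩

/-- Any non-degenerate open realization can be replaced by a bounded one. -/
lemma exists_bounded_nondegOpen {n d : ℕ} {C : Set (Finset (Fin n))} {U : Fin n → Set (Euc d)}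
    (hCe : ∅ ∈ C) (hU : IsNondegOpenReal C U) :
    ∃ R : ℝ, 0 < R ∧ ∃ U' : Fin n → Set (Euc d),
      IsNondegOpenReal C U' ∧ ∀ i, U' i ⊆ Metric.ball (0 : Euc d) R := by
  classical
  obtain ⟨⟨hconv, hopen, hcode⟩, hclcode⟩ := hU
  set w : Finset (Fin n) → Euc d :=
    fun σ => if h : σ ∈ codeOf U then h.choose else 0 with hw
  set w' : Finset (Fin n) → Euc d :=
    fun σ => if h : σ ∈ codeOf (fun i => closure (U i)) then h.choose else 0 with hw'
  have hwspec : ∀ σ ∈ C, ∀ i, w σ ∈ U i ↔ i ∈ σ := by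
    intro σ hσ i
    rw [← hcode] at hσ
    simp only [hw, dif_pos hσ]
    exact hσ.choose_spec i
  have hw'spec : ∀ σ ∈ C, ∀ i, w' σ ∈ closure (U i) ↔ i ∈ σ := by
    intro σ hσ i
    rw [← hclcode] at hσ
    simp only [hw', dif_pos hσ]
    exact hσ.choose_spec i
  have hne : (Finset.univ : Finset (Finset (Fin n))).Nonempty := ⟨∅, Finset.mem_univ _⟩
  set M : ℝ := Finset.univ.sup' hne (fun σ => max ‖w σ‖ ‖w' σ‖) with hM
  have hM0 : 0 ≤ M := by
    have h1 := Finset.le_sup' (fun σ => max ‖w σ‖ ‖w' σ‖) (Finset.mem_univ (∅ : Finset (Fin n)))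
    have h0 : (0:ℝ) ≤ max ‖w ∅‖ ‖w' ∅‖ := le_max_of_le_left (norm_nonneg _)
    exact le_trans h0 h1
  set R : ℝ := M + 1 with hR
  have hR0 : 0 < R := by linarith
  set B : Set (Euc d) := Metric.ball (0 : Euc d) R with hB
  have hwB : ∀ σ, w σ ∈ B := by
    intro σ
    have h1 : ‖w σ‖ ≤ M := by
      have h2 := Finset.le_sup' (fun σ => max ‖w σ‖ ‖w' σ‖) (Finset.mem_univ σ)
      exact le_trans (le_max_left _ _) h2
    simp only [hB, Metric.mem_ball, dist_zero_right]
    linarith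
  have hw'B : ∀ σ, w' σ ∈ B := by
    intro σ
    have h1 : ‖w' σ‖ ≤ M := by
      have h2 := Finset.le_sup' (fun σ => max ‖w σ‖ ‖w' σ‖) (Finset.mem_univ σ)
      exact le_trans (le_max_right _ _) h2
    simp only [hB, Metric.mem_ball, dist_zero_right]
    linarith
  have hmeet : ∀ i, (U i).Nonempty → (U i ∩ B).Nonempty := by
    intro i ⟨p, hp⟩
    have hσ : (Finset.univ.filter fun j => p ∈ U j) ∈ codeOf U := ⟨p, fun j => by simp⟩
    have hσC : (Finset.univ.filter fun j => p ∈ U j) ∈ C := by rwa [hcode] at hσ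
    refine ⟨w _, (hwspec _ hσC i).2 (by simp [hp]), hwB _⟩
  have hclkey : ∀ i z, z ∈ closure (U i) → z ∈ closure B → z ∈ closure (U i ∩ B) := by
    intro i z hzU hzB
    have hUne : (U i).Nonempty := by
      rcases eq_empty_or_nonempty (U i) with he | h
      · rw [he] at hzU; simp at hzU
      · exact h
    obtain ⟨x, hxU, hxB⟩ := hmeet i hUne
    have := seg_mem_closure (hconv i) (convex_ball (0 : Euc d) R)
      (by rwa [(hopen i).interior_eq]) (by rwa [Metric.isOpen_ball.interior_eq]) hzU hzB
    rwa [(hopen i).interior_eq, Metric.isOpen_ball.interior_eq] at this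
  refine ⟨R, hR0, fun i => U i ∩ B, ⟨⟨fun i => (hconv i).inter (convex_ball _ _),
    fun i => (hopen i).inter Metric.isOpen_ball, ?_⟩, ?_⟩, fun i => inter_subset_right⟩
  · -- codeOf (U ∩ B) = C
    ext σ
    constructor
    · rintro ⟨p, hp⟩
      by_cases hpB : p ∈ B
      · have : σ ∈ codeOf U := ⟨p, fun i => by rw [← hp i]; exact ⟨fun h => ⟨h, hpB⟩, fun h => h.1⟩⟩
        rwa [hcode] at this
      · have : σ = ∅ := by
          ext i
          simp only [Finset.notMem_empty, iff_false]
          intro hi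
          exact hpB ((hp i).2 hi).2
        rwa [this]
    · intro hσ
      exact ⟨w σ, fun i => by
        rw [mem_inter_iff, hwspec σ hσ i]
        exact ⟨fun h => h.1, fun h => ⟨h, hwB σ⟩⟩⟩
  · -- codeOf (closure ∘ (U ∩ B)) = C
    ext σ
    constructor
    · rintro ⟨p, hp⟩
      by_cases hpB : p ∈ closure B
      · have : σ ∈ codeOf (fun i => closure (U i)) := by
          refine ⟨p, fun i => ?_⟩
          rw [← hp i]
          exact ⟨fun h => hclkey i p h hpB, fun h => closure_mono inter_subset_left h⟩
        rwa [hclcode] at this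
      · have : σ = ∅ := by
          ext i
          simp only [Finset.notMem_empty, iff_false]
          intro hi
          exact hpB (closure_mono inter_subset_right ((hp i).2 hi))
        rwa [this]
    · intro hσ
      refine ⟨w' σ, fun i => ?_⟩
      rw [← hw'spec σ hσ i]
      exact ⟨fun h => closure_mono inter_subset_left h,
        fun h => hclkey i _ h (subset_closure (hw'B σ))⟩

lemma natAdd_not_mem_map_left {n m : ℕ} (σ : Finset (Fin n)) (j : Fin m) :
    Fin.natAdd n j ∉ σ.map (finLeftEmb n m) := by
  intro h
  obtain ⟨i, _, hi⟩ := Finset.mem_map.mp h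
  have := congrArg Fin.val hi
  change (i : ℕ) = n + (j : ℕ) at this
  have := i.2
  omega

lemma castAdd_not_mem_map_right {n m : ℕ} (σ : Finset (Fin m)) (i : Fin n) :
    Fin.castAdd m i ∉ σ.map (finRightEmb n m) := by
  intro h
  obtain ⟨j, _, hj⟩ := Finset.mem_map.mp h
  have := congrArg Fin.val hj
  change n + (j : ℕ) = (i : ℕ) at this
  have := i.2
  omega

lemma castAdd_mem_map_left {n m : ℕ} (σ : Finset (Fin n)) (i : Fin n) :
    Fin.castAdd m i ∈ σ.map (finLeftEmb n m) ↔ i ∈ σ := by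
  rw [← finLeftEmb_eq_castAdd, Finset.mem_map']

lemma natAdd_mem_map_right {n m : ℕ} (σ : Finset (Fin m)) (j : Fin m) :
    Fin.natAdd n j ∈ σ.map (finRightEmb n m) ↔ j ∈ σ := by
  rw [← finRightEmb_eq_natAdd, Finset.mem_map']

/-- Combining two realizations supported on disjoint regions realizes the code sum. -/
lemma codeOf_addCases {n m d : ℕ} (A : Fin n → Set (Euc d)) (B : Fin m → Set (Euc d))
    {C : Set (Finset (Fin n))} {D : Set (Finset (Fin m))}
    (hA : codeOf A = C) (hB : codeOf B = D)
    {S S' : Set (Euc d)} (hAS : ∀ i, A i ⊆ S) (hBS : ∀ j, B j ⊆ S')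
    (hdis : Disjoint S S') {p₀ : Euc d} (h₀ : p₀ ∉ S) (h₀' : p₀ ∉ S')
    (hC : ∅ ∈ C) :
    codeOf (Fin.addCases A B : Fin (n + m) → Set (Euc d)) = codeSum C D := by
  classical
  have hdis' : ∀ {p : Euc d}, p ∈ S → p ∈ S' → False := fun hp hp' =>
    Set.disjoint_left.mp hdis hp hp'
  ext τ
  constructor
  · rintro ⟨p, hp⟩
    have hpL : ∀ i : Fin n, p ∈ A i ↔ Fin.castAdd m i ∈ τ := fun i => by
      have := hp (Fin.castAdd m i); simpa only [Fin.addCases_left] using this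
    have hpR : ∀ j : Fin m, p ∈ B j ↔ Fin.natAdd n j ∈ τ := fun j => by
      have := hp (Fin.natAdd n j); simpa only [Fin.addCases_right] using this
    by_cases hpS : ∃ i, p ∈ A i
    · obtain ⟨i₀, hi₀⟩ := hpS
      have hnB : ∀ j, p ∉ B j := fun j hj => hdis' (hAS i₀ hi₀) (hBS j hj)
      set σL : Finset (Fin n) := Finset.univ.filter (fun i => p ∈ A i) with hσL
      have hσLC : σL ∈ C := by
        rw [← hA]; exact ⟨p, fun i => by simp [hσL]⟩
      refine Or.inl ⟨σL, hσLC, ?_⟩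
      ext k
      refine Fin.addCases (fun i => ?_) (fun j => ?_) k
      · rw [← hpL i, castAdd_mem_map_left]; simp [hσL]
      · simp only [natAdd_not_mem_map_left, iff_false]
        rw [← hpR j]; exact hnB j
    · push_neg at hpS
      by_cases hpS' : ∃ j, p ∈ B j
      · obtain ⟨j₀, hj₀⟩ := hpS'
        set σR : Finset (Fin m) := Finset.univ.filter (fun j => p ∈ B j) with hσR
        have hσRD : σR ∈ D := by
          rw [← hB]; exact ⟨p, fun j => by simp [hσR]⟩
        refine Or.inr ⟨σR, hσRD, ?_⟩
        ext k
        refine Fin.addCases (fun i => ?_) (fun j => ?_) k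
        · simp only [castAdd_not_mem_map_right, iff_false]
          rw [← hpL i]; exact hpS i
        · rw [← hpR j, natAdd_mem_map_right]; simp [hσR]
      · push_neg at hpS'
        have hτ : τ = ∅ := by
          ext k
          simp only [Finset.notMem_empty, iff_false]
          refine Fin.addCases (fun i => ?_) (fun j => ?_) k
          · rw [← hpL i]; exact hpS i
          · rw [← hpR j]; exact hpS' j
        exact Or.inl ⟨∅, hC, by simp [hτ]⟩
  · rintro (⟨σ, hσ, rfl⟩ | ⟨σ, hσ, rfl⟩)
    · rw [← hA] at hσ
      obtain ⟨p, hp⟩ := hσ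
      rcases σ.eq_empty_or_nonempty with rfl | ⟨i₀, hi₀⟩
      · refine ⟨p₀, fun k => ?_⟩
        simp only [Finset.map_empty, Finset.notMem_empty, iff_false]
        refine Fin.addCases (fun i => ?_) (fun j => ?_) k
        · simp only [Fin.addCases_left]; exact fun h => h₀ (hAS i h)
        · simp only [Fin.addCases_right]; exact fun h => h₀' (hBS j h)
      · have hpA : p ∈ A i₀ := (hp i₀).mpr hi₀
        refine ⟨p, fun k => ?_⟩
        refine Fin.addCases (fun i => ?_) (fun j => ?_) k
        · simp only [Fin.addCases_left, castAdd_mem_map_left]; exact hp i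
        · simp only [Fin.addCases_right]
          simp only [natAdd_not_mem_map_left, iff_false]
          exact fun h => hdis' (hAS i₀ hpA) (hBS j h)
    · rw [← hB] at hσ
      obtain ⟨p, hp⟩ := hσ
      rcases σ.eq_empty_or_nonempty with rfl | ⟨j₀, hj₀⟩
      · refine ⟨p₀, fun k => ?_⟩
        simp only [Finset.map_empty, Finset.notMem_empty, iff_false]
        refine Fin.addCases (fun i => ?_) (fun j => ?_) k
        · simp only [Fin.addCases_left]; exact fun h => h₀ (hAS i h)
        · simp only [Fin.addCases_right]; exact fun h => h₀' (hBS j h)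
      · have hpB : p ∈ B j₀ := (hp j₀).mpr hj₀
        refine ⟨p, fun k => ?_⟩
        refine Fin.addCases (fun i => ?_) (fun j => ?_) k
        · simp only [Fin.addCases_left]
          simp only [castAdd_not_mem_map_right, iff_false]
          exact fun h => hdis' (hAS i h) (hBS j₀ hpB)
        · simp only [Fin.addCases_right, natAdd_mem_map_right]; exact hp j

lemma exists_nondegOpen_of_hasNondeg {n d : ℕ} {C : Set (Finset (Fin n))}
    (h : HasNondegReal C d) : ∃ U : Fin n → Set (Euc d), IsNondegOpenReal C U := by
  rcases h with ⟨U, hU⟩ | ⟨X, hX⟩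
  · exact ⟨U, hU⟩
  · exact ⟨_, nondegOpen_of_nondegClosed hX⟩

/-- Backward direction for `d ≥ 1`. -/
lemma hasNondeg_codeSum_of_both {n m d : ℕ} (hd : 1 ≤ d)
    {C : Set (Finset (Fin n))} {D : Set (Finset (Fin m))}
    (hC : ∅ ∈ C) (hD : ∅ ∈ D)
    (h1 : HasNondegReal C d) (h2 : HasNondegReal D d) :
    HasNondegReal (codeSum C D) d := by
  obtain ⟨U₀, hU₀⟩ := exists_nondegOpen_of_hasNondeg h1
  obtain ⟨W₀, hW₀⟩ := exists_nondegOpen_of_hasNondeg h2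
  obtain ⟨R₁, hR₁, U, hU, hUsub⟩ := exists_bounded_nondegOpen hC hU₀
  obtain ⟨R₂, hR₂, W, hW, hWsub⟩ := exists_bounded_nondegOpen hD hW₀
  obtain ⟨⟨hUconv, hUopen, hUcode⟩, hUclcode⟩ := hU
  obtain ⟨⟨hWconv, hWopen, hWcode⟩, hWclcode⟩ := hW
  set e : Euc d := EuclideanSpace.single (⟨0, hd⟩ : Fin d) (1 : ℝ) with he
  have hnorme : ‖e‖ = 1 := by rw [he, EuclideanSpace.norm_single, norm_one]
  set v : Euc d := (R₁ + R₂ + 1) • e with hv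
  have hnormv : ‖v‖ = R₁ + R₂ + 1 := by
    rw [hv, norm_smul, hnorme, Real.norm_eq_abs, mul_one, abs_of_pos (by linarith)]
  set f : Euc d → Euc d := fun x => x - v with hf
  have hfsurj : Function.Surjective f := fun y => ⟨y + v, by simp [hf]⟩
  set T : Fin m → Set (Euc d) := fun j => f ⁻¹' (W j) with hT
  have hTconv : ∀ j, Convex ℝ (T j) := by
    intro j
    have : f = fun x => x + (-v) := by funext x; rw [hf]; exact sub_eq_add_neg x v
    rw [hT, this]
    exact (hWconv j).translate_preimage_left (-v)
  have hTopen : ∀ j, IsOpen (T j) := fun j =>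
    (hWopen j).preimage (continuous_id.sub continuous_const)
  have hfhomeo : ⇑(Homeomorph.subRight v) = f := rfl
  have hTcl : ∀ j, closure (T j) = f ⁻¹' closure (W j) := by
    intro j
    rw [hT]
    rw [← hfhomeo, Homeomorph.preimage_closure]
  have hTcode : codeOf T = D := by rw [hT, codeOf_preimage f hfsurj, hWcode]
  have hTclcode : codeOf (fun j => closure (T j)) = D := by
    have : (fun j => closure (T j)) = fun j => f ⁻¹' closure (W j) := funext hTcl
    rw [this, codeOf_preimage f hfsurj, hWclcode]
  -- bounding regions
  set S : Set (Euc d) := Metric.closedBall (0 : Euc d) R₁ with hS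
  set S' : Set (Euc d) := Metric.closedBall v R₂ with hS'
  have hUS : ∀ i, U i ⊆ S := fun i =>
    (hUsub i).trans Metric.ball_subset_closedBall
  have hUclS : ∀ i, closure (U i) ⊆ S := fun i =>
    closure_minimal (hUS i) Metric.isClosed_closedBall
  have hTS' : ∀ j, T j ⊆ S' := by
    intro j x hx
    have hWx : x - v ∈ W j := hx
    have : dist (x - v) 0 < R₂ := Metric.mem_ball.mp (hWsub j hWx)
    rw [hS', Metric.mem_closedBall, dist_eq_norm]
    rw [dist_eq_norm, sub_zero] at this
    linarith
  have hTclS' : ∀ j, closure (T j) ⊆ S' := fun j =>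
    closure_minimal (hTS' j) Metric.isClosed_closedBall
  have hdis : Disjoint S S' := by
    rw [hS, hS']
    apply Metric.closedBall_disjoint_closedBall
    rw [dist_zero_left, hnormv]
    linarith
  -- the far-away point
  set p₀ : Euc d := (-(R₁ + 1)) • e with hp₀
  have hp₀S : p₀ ∉ S := by
    rw [hS, Metric.mem_closedBall, dist_zero_right, hp₀, norm_smul, hnorme,
      Real.norm_eq_abs, mul_one, abs_of_neg (by linarith)]
    intro h
    linarith
  have hp₀S' : p₀ ∉ S' := by
    rw [hS', Metric.mem_closedBall, dist_eq_norm]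
    have : p₀ - v = (-(R₁ + 1) - (R₁ + R₂ + 1)) • e := by
      rw [hp₀, hv, ← sub_smul]
    rw [this, norm_smul, hnorme, Real.norm_eq_abs, mul_one, abs_of_neg (by linarith)]
    intro h
    linarith
  -- the combined realization
  set V : Fin (n + m) → Set (Euc d) := Fin.addCases U T with hV
  have hVcl : (fun k => closure (V k)) =
      (Fin.addCases (fun i => closure (U i)) (fun j => closure (T j)) :
        Fin (n + m) → Set (Euc d)) := by
    funext k
    refine Fin.addCases (fun i => ?_) (fun j => ?_) k
    · simp only [hV, Fin.addCases_left]
    · simp only [hV, Fin.addCases_right]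
  refine Or.inl ⟨V, ⟨⟨?_, ?_, ?_⟩, ?_⟩⟩
  · intro k
    refine Fin.addCases (fun i => ?_) (fun j => ?_) k
    · simpa only [hV, Fin.addCases_left] using hUconv i
    · simpa only [hV, Fin.addCases_right] using hTconv j
  · intro k
    refine Fin.addCases (fun i => ?_) (fun j => ?_) k
    · simpa only [hV, Fin.addCases_left] using hUopen i
    · simpa only [hV, Fin.addCases_right] using hTopen j
  · exact codeOf_addCases U T hUcode hTcode hUS hTS' hdis hp₀S hp₀S' hC
  · rw [hVcl]
    exact codeOf_addCases _ _ hUclcode hTclcode hUclS hTclS' hdis hp₀S hp₀S' hC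

instance : Subsingleton (Euc 0) := ⟨fun a b => PiLp.ext fun i => i.elim0⟩

lemma code_singleton_of_dim0 {n : ℕ} {C : Set (Finset (Fin n))} (hC : ∅ ∈ C)
    (U : Fin n → Set (Euc 0)) (h : codeOf U = C) : C = {∅} := by
  ext σ
  simp only [mem_singleton_iff]
  constructor
  · intro hσ
    obtain ⟨p, hp⟩ : σ ∈ codeOf U := h ▸ hσ
    obtain ⟨q, hq⟩ : (∅ : Finset (Fin n)) ∈ codeOf U := h ▸ hC
    have hpq : p = q := Subsingleton.elim p q
    ext i
    rw [← hp i, hpq, hq i]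
  · rintro rfl; exact hC

lemma codeOf_all_empty {n d : ℕ} :
    codeOf (fun _ : Fin n => (∅ : Set (Euc d))) = {∅} := by
  ext σ
  simp only [mem_singleton_iff]
  constructor
  · rintro ⟨p, hp⟩
    ext i
    simp only [Finset.notMem_empty, iff_false]
    rw [← hp i]
    exact notMem_empty p
  · rintro rfl
    exact ⟨0, fun i => by simp⟩

lemma nondegOpen_all_empty {n d : ℕ} :
    IsNondegOpenReal ({∅} : Set (Finset (Fin n))) (fun _ => (∅ : Set (Euc d))) := by
  refine ⟨⟨fun _ => convex_empty, fun _ => isOpen_empty, codeOf_all_empty⟩, ?_⟩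
  simpa using codeOf_all_empty (n := n) (d := d)

lemma hasNondeg_zero_iff {n : ℕ} {C : Set (Finset (Fin n))} (hC : ∅ ∈ C) :
    HasNondegReal C 0 ↔ C = {∅} := by
  constructor
  · rintro (⟨U, ⟨⟨_, _, hcode⟩, _⟩⟩ | ⟨X, ⟨⟨_, _, hcode⟩, _⟩⟩) <;>
      exact code_singleton_of_dim0 hC _ hcode
  · rintro rfl
    exact Or.inl ⟨_, nondegOpen_all_empty⟩

lemma codeSum_singleton {n m : ℕ} :
    codeSum ({∅} : Set (Finset (Fin n))) ({∅} : Set (Finset (Fin m))) = {∅} := by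
  ext τ
  simp only [codeSum, mem_union, mem_setOf_eq, mem_singleton_iff]
  constructor
  · rintro (⟨σ, rfl, rfl⟩ | ⟨σ, rfl, rfl⟩) <;> simp
  · rintro rfl
    exact Or.inl ⟨∅, rfl, by simp⟩

/-- Monotonicity in the dimension. -/
lemma hasNondeg_mono {n : ℕ} {C : Set (Finset (Fin n))} {d d' : ℕ} (h : d ≤ d')
    (hC : HasNondegReal C d) : HasNondegReal C d' := by
  obtain ⟨U, ⟨⟨hconv, hopen, hcode⟩, hclcode⟩⟩ := exists_nondegOpen_of_hasNondeg hC
  set lin : Euc d' →ₗ[ℝ] Euc d :=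
    { toFun := fun x => (WithLp.toLp 2 (fun i => x (Fin.castLE h i)) : Euc d)
      map_add' := fun x y => rfl
      map_smul' := fun c x => rfl } with hlin
  set π : Euc d' → Euc d := fun x => lin x with hπ
  have hsurj : Function.Surjective π := by
    intro y
    refine ⟨(WithLp.toLp 2 (fun j => if h' : (j : ℕ) < d then y ⟨j, h'⟩ else 0) : Euc d'), ?_⟩
    ext i
    show (if h' : ((Fin.castLE h i : Fin d') : ℕ) < d then y ⟨(Fin.castLE h i : Fin d'), h'⟩ else 0) = y i
    rw [dif_pos (show ((Fin.castLE h i : Fin d') : ℕ) < d from i.2)]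
    exact congrArg y.ofLp (Fin.eta i i.2)
  have hcont : Continuous π := lin.continuous_of_finiteDimensional
  have hopenmap : IsOpenMap π :=
    ContinuousLinearMap.isOpenMap (LinearMap.toContinuousLinearMap lin) hsurj
  have hclcomm : ∀ s : Set (Euc d), closure (π ⁻¹' s) = π ⁻¹' closure s := by
    intro s
    exact (hopenmap.preimage_closure_eq_closure_preimage hcont s).symm
  refine Or.inl ⟨fun i => π ⁻¹' (U i), ⟨⟨?_, ?_, ?_⟩, ?_⟩⟩
  · exact fun i => (hconv i).linear_preimage lin
  · exact fun i => (hopen i).preimage hcont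
  · rw [codeOf_preimage π hsurj, hcode]
  · have : (fun i => closure (π ⁻¹' U i)) = fun i => π ⁻¹' closure (U i) :=
      funext fun i => hclcomm (U i)
    rw [this, codeOf_preimage π hsurj, hclcode]

/-- The infimum of dimensions satisfying a satisfiable predicate is attained. -/
lemma nddim_attained (P : ℕ → Prop) (h : ∃ d, P d) :
    sInf {e : ℕ∞ | ∃ d : ℕ, e = d ∧ P d} ∈ {e : ℕ∞ | ∃ d : ℕ, e = d ∧ P d} := by
  classical
  have hmem : ((Nat.find h : ℕ) : ℕ∞) ∈ {e : ℕ∞ | ∃ d : ℕ, e = d ∧ P d} :=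
    ⟨Nat.find h, rfl, Nat.find_spec h⟩
  have heq : sInf {e : ℕ∞ | ∃ d : ℕ, e = d ∧ P d} = ((Nat.find h : ℕ) : ℕ∞) := by
    apply le_antisymm (sInf_le hmem)
    apply le_sInf
    rintro e ⟨d, rfl, hPd⟩
    exact_mod_cast Nat.find_min' h hPd
  rw [heq]; exact hmem

lemma empty_dim_set (P : ℕ → Prop) (h : ¬ ∃ d, P d) :
    {e : ℕ∞ | ∃ d : ℕ, e = d ∧ P d} = ∅ := by
  push_neg at h
  ext e
  simp only [mem_setOf_eq, mem_empty_iff_false, iff_false]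
  rintro ⟨d, rfl, hPd⟩
  exact h d hPd

lemma sInf_inter_le_aux (P Q : ℕ → Prop) (hP : ∀ {a b : ℕ}, a ≤ b → P a → P b)
    (hle : sInf {e : ℕ∞ | ∃ d : ℕ, e = d ∧ P d} ≤ sInf {e : ℕ∞ | ∃ d : ℕ, e = d ∧ Q d}) :
    sInf {e : ℕ∞ | ∃ d : ℕ, e = d ∧ (P d ∧ Q d)} ≤ sInf {e : ℕ∞ | ∃ d : ℕ, e = d ∧ Q d} := by
  by_cases hQne : ∃ d, Q d
  · obtain ⟨d₀, hEq, hQd₀⟩ := nddim_attained Q hQne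
    have hPne : ∃ d, P d := by
      by_contra hPe
      rw [empty_dim_set P hPe, sInf_empty] at hle
      rw [hEq] at hle
      exact (ENat.coe_lt_top d₀).not_ge (hle.trans (le_refl _))
    obtain ⟨d₁, hEq', hPd₁⟩ := nddim_attained P hPne
    rw [hEq, hEq'] at hle
    have hd : d₁ ≤ d₀ := by exact_mod_cast hle
    have hPd₀ : P d₀ := hP hd hPd₁
    calc sInf {e : ℕ∞ | ∃ d : ℕ, e = d ∧ (P d ∧ Q d)} ≤ (d₀ : ℕ∞) :=
          sInf_le ⟨d₀, rfl, hPd₀, hQd₀⟩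
      _ = sInf {e : ℕ∞ | ∃ d : ℕ, e = d ∧ Q d} := hEq.symm
  · rw [empty_dim_set Q hQne, sInf_empty]
    exact le_top

lemma sInf_and_eq_max (P Q : ℕ → Prop) (hP : ∀ {a b : ℕ}, a ≤ b → P a → P b)
    (hQ : ∀ {a b : ℕ}, a ≤ b → Q a → Q b) :
    sInf {e : ℕ∞ | ∃ d : ℕ, e = d ∧ (P d ∧ Q d)} =
      max (sInf {e : ℕ∞ | ∃ d : ℕ, e = d ∧ P d}) (sInf {e : ℕ∞ | ∃ d : ℕ, e = d ∧ Q d}) := by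
  apply le_antisymm
  · rcases le_total (sInf {e : ℕ∞ | ∃ d : ℕ, e = d ∧ P d})
      (sInf {e : ℕ∞ | ∃ d : ℕ, e = d ∧ Q d}) with hle | hle
    · rw [max_eq_right hle]
      exact sInf_inter_le_aux P Q hP hle
    · rw [max_eq_left hle]
      have hswap : {e : ℕ∞ | ∃ d : ℕ, e = d ∧ (P d ∧ Q d)} =
          {e : ℕ∞ | ∃ d : ℕ, e = d ∧ (Q d ∧ P d)} := by
        ext e
        constructor <;> rintro ⟨d, rfl, h1, h2⟩ <;> exact ⟨d, rfl, h2, h1⟩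
      rw [hswap]
      exact sInf_inter_le_aux Q P hQ hle
  · apply max_le <;> apply sInf_le_sInf <;> rintro e ⟨d, rfl, h1, h2⟩
    · exact ⟨d, rfl, h1⟩
    · exact ⟨d, rfl, h2⟩

end Aux
/-- `C ⊔ D` has a non-degenerate convex realization in `ℝ^d` iff both `C` and `D` do;
consequently `nddim (C ⊔ D) = max (nddim C) (nddim D)`. -/
theorem codeSum_nondeg {n m : ℕ} (C : Set (Finset (Fin n))) (D : Set (Finset (Fin m)))
    (hC : ∅ ∈ C) (hD : ∅ ∈ D) :
    (∀ d : ℕ, 1 ≤ d → (HasNondegReal (codeSum C D) d ↔ HasNondegReal C d ∧ HasNondegReal D d)) ∧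
    nddim (codeSum C D) = max (nddim C) (nddim D) := by
  have hiff : ∀ d : ℕ, HasNondegReal (codeSum C D) d ↔ HasNondegReal C d ∧ HasNondegReal D d := by
    intro d
    constructor
    · exact hasNondeg_of_codeSum hC hD
    · rintro ⟨h1, h2⟩
      rcases Nat.eq_zero_or_pos d with rfl | hd
      · rw [hasNondeg_zero_iff hC] at h1
        rw [hasNondeg_zero_iff hD] at h2
        subst h1; subst h2
        rw [hasNondeg_zero_iff (by rw [codeSum_singleton]; rfl), codeSum_singleton]
      · exact hasNondeg_codeSum_of_both hd hC hD h1 h2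
  refine ⟨fun d _ => hiff d, ?_⟩
  have hset : {e : ℕ∞ | ∃ d : ℕ, e = d ∧ HasNondegReal (codeSum C D) d} =
      {e : ℕ∞ | ∃ d : ℕ, e = d ∧ (HasNondegReal C d ∧ HasNondegReal D d)} := by
    ext e
    constructor <;> rintro ⟨d, rfl, hd⟩
    · exact ⟨d, rfl, (hiff d).mp hd⟩
    · exact ⟨d, rfl, (hiff d).mpr hd⟩
  show sInf _ = max (sInf _) (sInf _)
  rw [hset]
  exact sInf_and_eq_max _ _ (fun hab h => hasNondeg_mono hab h) (fun hab h => hasNondeg_mono hab h)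

end
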